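/- Let E be a real inner product space, D a nonempty finite set with |D| = N, and (g_n)_{n∈D} a family of vectors in E such that ‖g_n‖² ≤ B for every n ∈ D, where B ≥ 0. Let S ⊆ D be nonempty with |S| = M. Then ‖(1/N)·∑_{n∈D} g_n − (1/M)·∑_{n∈S} g_n‖² ≤ ((N − M)/M)·B. -/

import Mathlib

/-- Lemma 2 core (subsampling error bound): if `‖g n‖² ≤ B` for all `n` in a finite
set `D` of cardinality `N`, and `S ⊆ D` is nonempty of cardinality `M`, then the
squared distance between the full average and the subsample average is at most
`((N − M)/M)·B`. -/
theorem semifl_subsample_bound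
    {E : Type*} [NormedAddCommGroup E] [InnerProductSpace ℝ E]
    {ι : Type*} (D S : Finset ι) (hSD : S ⊆ D) (hD : D.Nonempty) (hS : S.Nonempty)
    (g : ι → E) (B : ℝ) (hB : 0 ≤ B) (hg : ∀ n ∈ D, ‖g n‖ ^ 2 ≤ B)
    (N M : ℕ) (hN : D.card = N) (hM : S.card = M) :
    ‖(1 / (N : ℝ)) • ∑ n ∈ D, g n - (1 / (M : ℝ)) • ∑ n ∈ S, g n‖ ^ 2 ≤
      ((N : ℝ) - M) / M * B := by
  classical
  have hMN : M ≤ N := by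
    rw [← hN, ← hM]; exact Finset.card_le_card hSD
  have hNpos : (0:ℝ) < N := by
    have := hD.card_pos; rw [hN] at this; exact_mod_cast this
  have hMpos : (0:ℝ) < M := by
    have := hS.card_pos; rw [hM] at this; exact_mod_cast this
  have hMNr : (M:ℝ) ≤ N := by exact_mod_cast hMN
  set c := Real.sqrt B with hc
  have hc0 : 0 ≤ c := Real.sqrt_nonneg B
  have hc2 : c ^ 2 = B := Real.sq_sqrt hB
  have hgc : ∀ n ∈ D, ‖g n‖ ≤ c := by
    intro n hn
    have h := hg n hn
    nlinarith [norm_nonneg (g n)]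
  have hsplit : ∑ n ∈ D, g n = ∑ n ∈ D \ S, g n + ∑ n ∈ S, g n :=
    (Finset.sum_sdiff hSD).symm
  have hq : (0:ℝ) ≤ ((N:ℝ) - M)/((N:ℝ)*M) :=
    div_nonneg (by linarith) (by positivity)
  have key : (1 / (N : ℝ)) • ∑ n ∈ D, g n - (1 / (M : ℝ)) • ∑ n ∈ S, g n
      = (1 / (N:ℝ)) • ∑ n ∈ D \ S, g n
        - (((N:ℝ) - M)/((N:ℝ)*M)) • ∑ n ∈ S, g n := by
    rw [hsplit]
    match_scalars <;> field_simp <;> ring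
  have hcardDS : (((D \ S).card : ℝ)) = (N:ℝ) - M := by
    rw [Finset.card_sdiff_of_subset hSD, hN, hM, Nat.cast_sub hMN]
  have hA : ‖∑ n ∈ D \ S, g n‖ ≤ ((N:ℝ) - M) * c := by
    calc ‖∑ n ∈ D \ S, g n‖ ≤ ∑ n ∈ D \ S, ‖g n‖ := norm_sum_le _ _
    _ ≤ ∑ _n ∈ D \ S, c :=
        Finset.sum_le_sum (fun n hn => hgc n (Finset.mem_sdiff.mp hn).1)
    _ = (((D \ S).card : ℝ)) * c := by rw [Finset.sum_const, nsmul_eq_mul]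
    _ = ((N:ℝ) - M) * c := by rw [hcardDS]
  have hBsum : ‖∑ n ∈ S, g n‖ ≤ (M:ℝ) * c := by
    calc ‖∑ n ∈ S, g n‖ ≤ ∑ n ∈ S, ‖g n‖ := norm_sum_le _ _
    _ ≤ ∑ _n ∈ S, c := Finset.sum_le_sum (fun n hn => hgc n (hSD hn))
    _ = ((S.card : ℝ)) * c := by rw [Finset.sum_const, nsmul_eq_mul]
    _ = (M:ℝ) * c := by rw [hM]
  have hnorm : ‖(1 / (N : ℝ)) • ∑ n ∈ D, g n - (1 / (M : ℝ)) • ∑ n ∈ S, g n‖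
      ≤ 2 * ((N:ℝ) - M) * c / N := by
    rw [key]
    have h1 : ‖(1 / (N:ℝ)) • ∑ n ∈ D \ S, g n‖ ≤ (1/(N:ℝ)) * (((N:ℝ) - M) * c) := by
      rw [norm_smul, Real.norm_eq_abs, abs_of_nonneg (by positivity)]
      exact mul_le_mul_of_nonneg_left hA (by positivity)
    have h2 : ‖(((N:ℝ) - M)/((N:ℝ)*M)) • ∑ n ∈ S, g n‖
        ≤ (((N:ℝ) - M)/((N:ℝ)*M)) * ((M:ℝ) * c) := by
      rw [norm_smul, Real.norm_eq_abs, abs_of_nonneg hq]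
      exact mul_le_mul_of_nonneg_left hBsum hq
    calc ‖(1 / (N:ℝ)) • ∑ n ∈ D \ S, g n
          - (((N:ℝ) - M)/((N:ℝ)*M)) • ∑ n ∈ S, g n‖
        ≤ ‖(1 / (N:ℝ)) • ∑ n ∈ D \ S, g n‖
          + ‖(((N:ℝ) - M)/((N:ℝ)*M)) • ∑ n ∈ S, g n‖ := norm_sub_le _ _
    _ ≤ (1/(N:ℝ)) * (((N:ℝ) - M) * c) + (((N:ℝ) - M)/((N:ℝ)*M)) * ((M:ℝ) * c) :=
        add_le_add h1 h2
    _ = 2 * ((N:ℝ) - M) * c / N := by field_simp; ring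
  have h0 : 0 ≤ ‖(1 / (N : ℝ)) • ∑ n ∈ D, g n - (1 / (M : ℝ)) • ∑ n ∈ S, g n‖ :=
    norm_nonneg _
  have hsq : ‖(1 / (N : ℝ)) • ∑ n ∈ D, g n - (1 / (M : ℝ)) • ∑ n ∈ S, g n‖ ^ 2
      ≤ (2 * ((N:ℝ) - M) * c / N) ^ 2 :=
    pow_le_pow_left₀ h0 hnorm 2
  refine hsq.trans ?_
  rw [div_pow, mul_pow, mul_pow, hc2]
  rw [div_le_iff₀ (by positivity), div_mul_eq_mul_div, div_mul_eq_mul_div, le_div_iff₀ hMpos]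
  nlinarith [sq_nonneg ((N:ℝ) - 2*M), mul_nonneg hB (sq_nonneg ((N:ℝ) - 2*M)),
    mul_nonneg (mul_nonneg hB (sq_nonneg ((N:ℝ) - 2*M))) (sub_nonneg.mpr hMNr)]
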